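/- Let a > 0, b > 0 and 1 < γ < 2 < 2θ < p. Let A, B, F, G > 0 and λ > 0, and define ψ(t) = (a t²/2)A + (b t^(2θ)/(2θ))B − (λ t^γ/γ)F − (t^p/p)G. If t₀ > 0 satisfies ψ'(t₀) = 0 and ψ''(t₀) = 0 (so t₀ is a degenerate critical point), then necessarily λ·F equals the maximum value of Φ(t) = a t^(2−γ)A + b t^(2θ−γ)B − t^(p−γ)G over t > 0, and t₀ is the unique maximizer of Φ. -/

import Mathlib

set_option maxHeartbeats 1000000


open Real

theorem stmt_14 (a b A B F G γ θ p l : ℝ) (ha : 0 < a) (hb : 0 < b)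
    (hγ1 : 1 < γ) (hγ2 : γ < 2) (h2θ : 2 < 2 * θ) (hθp : 2 * θ < p)
    (hA : 0 < A) (hB : 0 < B) (hF : 0 < F) (hG : 0 < G) (hl : 0 < l) :
    let ψ : ℝ → ℝ := fun t => a * t ^ (2 : ℝ) / 2 * A + b * t ^ (2 * θ) / (2 * θ) * B
      - l * t ^ γ / γ * F - t ^ p / p * G
    let Φ : ℝ → ℝ := fun t => a * t ^ (2 - γ) * A + b * t ^ (2 * θ - γ) * B - t ^ (p - γ) * G
    ∀ t₀ : ℝ, 0 < t₀ → deriv ψ t₀ = 0 → deriv (deriv ψ) t₀ = 0 →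
      l * F = Φ t₀ ∧ ∀ t : ℝ, 0 < t → t ≠ t₀ → Φ t < Φ t₀ := by
  intro ψ Φ t₀ ht₀ hd1 hd2
  have hψdef : ψ = fun t => a * t ^ (2 : ℝ) / 2 * A + b * t ^ (2 * θ) / (2 * θ) * B
      - l * t ^ γ / γ * F - t ^ p / p * G := rfl
  have hΦdef : Φ = fun t => a * t ^ (2 - γ) * A + b * t ^ (2 * θ - γ) * B - t ^ (p - γ) * G := rfl
  have hθ0 : (0:ℝ) < 2 * θ := by linarith
  have hγ0 : (0:ℝ) < γ := by linarith
  have hp0 : (0:ℝ) < p := by linarith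
  -- first derivative of ψ
  have hψ : ∀ t : ℝ, 0 < t → HasDerivAt ψ
      (a * A * t + b * B * t ^ (2*θ-1) - l * F * t ^ (γ-1) - G * t ^ (p-1)) t := by
    intro t ht
    have h1 := Real.hasDerivAt_rpow_const (x := t) (p := (2:ℝ)) (Or.inl ht.ne')
    have h2 := Real.hasDerivAt_rpow_const (x := t) (p := 2*θ) (Or.inl ht.ne')
    have h3 := Real.hasDerivAt_rpow_const (x := t) (p := γ) (Or.inl ht.ne')
    have h4 := Real.hasDerivAt_rpow_const (x := t) (p := p) (Or.inl ht.ne')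
    have H := ((((h1.const_mul a).div_const 2).mul_const A).add
        (((h2.const_mul b).div_const (2*θ)).mul_const B)).sub
        (((h3.const_mul l).div_const γ).mul_const F) |>.sub ((h4.div_const p).mul_const G)
    rw [hψdef]
    convert H using 1
    case e'_4 => rfl
    case e'_5 => rfl
    case e'_8 => rfl
    have e1 : t ^ ((2:ℝ)-1) = t := by norm_num
    rw [e1]
    have hθne : θ ≠ 0 := (by linarith : (0:ℝ) < θ).ne'
    field_simp
  -- the derivative function
  set D : ℝ → ℝ := fun t => a * A * t + b * B * t ^ (2*θ-1) - l * F * t ^ (γ-1) - G * t ^ (p-1)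
    with hDdef
  have hD1 : D t₀ = 0 := ((hψ t₀ ht₀).deriv).symm.trans hd1
  -- second derivative
  have hD : ∀ t : ℝ, 0 < t → HasDerivAt D
      (a*A + b*B*(2*θ-1)*t^(2*θ-2) - l*F*(γ-1)*t^(γ-2) - G*(p-1)*t^(p-2)) t := by
    intro t ht
    have h2 := Real.hasDerivAt_rpow_const (x := t) (p := 2*θ-1) (Or.inl ht.ne')
    have h3 := Real.hasDerivAt_rpow_const (x := t) (p := γ-1) (Or.inl ht.ne')
    have h4 := Real.hasDerivAt_rpow_const (x := t) (p := p-1) (Or.inl ht.ne')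
    have H := (((hasDerivAt_id t).const_mul (a*A)).add (h2.const_mul (b*B))).sub
        (h3.const_mul (l*F)) |>.sub (h4.const_mul G)
    rw [hDdef]
    convert H using 1
    case e'_4 => rfl
    case e'_5 => rfl
    case e'_8 => rfl
    rw [show 2*θ-1-1 = 2*θ-2 by ring, show γ-1-1 = γ-2 by ring, show p-1-1 = p-2 by ring]
    ring
  have hDeq : deriv ψ =ᶠ[nhds t₀] D :=
    Filter.eventuallyEq_of_mem (Ioi_mem_nhds ht₀) (fun t ht => (hψ t ht).deriv)
  have hD2 : a*A + b*B*(2*θ-1)*t₀^(2*θ-2) - l*F*(γ-1)*t₀^(γ-2) - G*(p-1)*t₀^(p-2) = 0 := by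
    have := hDeq.deriv_eq
    rw [this, (hD t₀ ht₀).deriv] at hd2
    exact hd2
  have hD1' : a * A * t₀ + b * B * t₀ ^ (2*θ-1) - l * F * t₀ ^ (γ-1) - G * t₀ ^ (p-1) = 0 := hD1
  -- rpow identities at t₀
  have e1 : t₀ ^ (2-γ) * t₀ ^ (γ-1) = t₀ := by
    rw [← Real.rpow_add ht₀, show 2-γ+(γ-1) = 1 by ring, Real.rpow_one]
  have e2 : t₀ ^ (2*θ-γ) * t₀ ^ (γ-1) = t₀ ^ (2*θ-1) := by
    rw [← Real.rpow_add ht₀, show 2*θ-γ+(γ-1) = 2*θ-1 by ring]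
  have e3 : t₀ ^ (p-γ) * t₀ ^ (γ-1) = t₀ ^ (p-1) := by
    rw [← Real.rpow_add ht₀, show p-γ+(γ-1) = p-1 by ring]
  have f2 : t₀ ^ (2*θ-1) = t₀ ^ (2*θ-2) * t₀ := by
    rw [show 2*θ-1 = (2*θ-2)+1 by ring, Real.rpow_add ht₀, Real.rpow_one]
  have f3 : t₀ ^ (γ-1) = t₀ ^ (γ-2) * t₀ := by
    rw [show γ-1 = (γ-2)+1 by ring, Real.rpow_add ht₀, Real.rpow_one]
  have f4 : t₀ ^ (p-1) = t₀ ^ (p-2) * t₀ := by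
    rw [show p-1 = (p-2)+1 by ring, Real.rpow_add ht₀, Real.rpow_one]
  have hsne : t₀ ^ (γ-1) ≠ 0 := (Real.rpow_pos_of_pos ht₀ _).ne'
  -- first conclusion
  have keyΦ : l * F = Φ t₀ := by
    rw [hΦdef]
    apply mul_right_cancel₀ hsne
    linear_combination (-1 : ℝ) * hD1' - a*A*e1 - b*B*e2 + G*e3
  -- the critical point equation for Φ
  have key2 : a*A*(2-γ) + b*B*(2*θ-γ)*t₀^(2*θ-2) - G*(p-γ)*t₀^(p-2) = 0 := by
    apply mul_right_cancel₀ ht₀.ne'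
    linear_combination t₀*hD2 - (γ-1)*hD1' + (γ-1)*b*B*f2 - (γ-1)*l*F*f3 - (γ-1)*G*f4
  have hc1 : 0 < a*A*(2-γ) := mul_pos (mul_pos ha hA) (by linarith)
  have hc2 : 0 < b*B*(2*θ-γ) := mul_pos (mul_pos hb hB) (by linarith)
  -- sign of h on (0, t₀) and (t₀, ∞)
  have hsign_pos : ∀ x : ℝ, 0 < x → x < t₀ →
      0 < a*A*(2-γ) + b*B*(2*θ-γ)*x^(2*θ-2) - G*(p-γ)*x^(p-2) := by
    intro x hx hxlt
    obtain ⟨s, hs0, hs1, hxs⟩ : ∃ s, 0 < s ∧ s < 1 ∧ x = t₀ * s :=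
      ⟨x/t₀, by positivity, (div_lt_one ht₀).2 hxlt, by field_simp⟩
    have hx2 : x ^ (2*θ-2) = t₀ ^ (2*θ-2) * s ^ (2*θ-2) := by
      rw [hxs, Real.mul_rpow ht₀.le hs0.le]
    have hxp : x ^ (p-2) = t₀ ^ (p-2) * s ^ (p-2) := by
      rw [hxs, Real.mul_rpow ht₀.le hs0.le]
    have hsb : s ^ (p-2) < s ^ (2*θ-2) :=
      Real.rpow_lt_rpow_of_exponent_gt hs0 hs1 (by linarith)
    have hsb1 : s ^ (p-2) < 1 := Real.rpow_lt_one hs0.le hs1 (by linarith)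
    have hT2 : 0 < t₀ ^ (2*θ-2) := Real.rpow_pos_of_pos ht₀ _
    rw [hx2, hxp]
    have expand : a*A*(2-γ) + b*B*(2*θ-γ)*(t₀^(2*θ-2)*s^(2*θ-2))
        - G*(p-γ)*(t₀^(p-2)*s^(p-2))
        = a*A*(2-γ)*(1 - s^(p-2)) + b*B*(2*θ-γ)*t₀^(2*θ-2)*(s^(2*θ-2) - s^(p-2)) := by
      linear_combination s^(p-2) * key2
    rw [expand]
    have := mul_pos hc1 (by linarith : (0:ℝ) < 1 - s^(p-2))
    have := mul_pos (mul_pos hc2 hT2) (by linarith : (0:ℝ) < s^(2*θ-2) - s^(p-2))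
    linarith
  have hsign_neg : ∀ x : ℝ, t₀ < x →
      a*A*(2-γ) + b*B*(2*θ-γ)*x^(2*θ-2) - G*(p-γ)*x^(p-2) < 0 := by
    intro x hxgt
    have hx : 0 < x := ht₀.trans hxgt
    obtain ⟨s, hs1, hxs⟩ : ∃ s, 1 < s ∧ x = t₀ * s :=
      ⟨x/t₀, (one_lt_div ht₀).2 hxgt, by field_simp⟩
    have hs0 : (0:ℝ) < s := by linarith
    have hx2 : x ^ (2*θ-2) = t₀ ^ (2*θ-2) * s ^ (2*θ-2) := by
      rw [hxs, Real.mul_rpow ht₀.le hs0.le]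
    have hxp : x ^ (p-2) = t₀ ^ (p-2) * s ^ (p-2) := by
      rw [hxs, Real.mul_rpow ht₀.le hs0.le]
    have hsb : s ^ (2*θ-2) < s ^ (p-2) :=
      Real.rpow_lt_rpow_of_exponent_lt hs1 (by linarith)
    have hsb1 : 1 < s ^ (p-2) := Real.one_lt_rpow_iff_of_pos hs0 |>.2 (Or.inl ⟨hs1, by linarith⟩)
    have hT2 : 0 < t₀ ^ (2*θ-2) := Real.rpow_pos_of_pos ht₀ _
    rw [hx2, hxp]
    have expand : a*A*(2-γ) + b*B*(2*θ-γ)*(t₀^(2*θ-2)*s^(2*θ-2))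
        - G*(p-γ)*(t₀^(p-2)*s^(p-2))
        = a*A*(2-γ)*(1 - s^(p-2)) + b*B*(2*θ-γ)*t₀^(2*θ-2)*(s^(2*θ-2) - s^(p-2)) := by
      linear_combination s^(p-2) * key2
    rw [expand]
    have := mul_pos hc1 (by linarith : (0:ℝ) < s^(p-2) - 1)
    have := mul_pos (mul_pos hc2 hT2) (by linarith : (0:ℝ) < s^(p-2) - s^(2*θ-2))
    linarith
  -- derivative of Φ
  have hΦ : ∀ x : ℝ, 0 < x → HasDerivAt Φ
      (x^(1-γ) * (a*A*(2-γ) + b*B*(2*θ-γ)*x^(2*θ-2) - G*(p-γ)*x^(p-2))) x := by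
    intro x hx
    have h1 := Real.hasDerivAt_rpow_const (x := x) (p := 2-γ) (Or.inl hx.ne')
    have h2 := Real.hasDerivAt_rpow_const (x := x) (p := 2*θ-γ) (Or.inl hx.ne')
    have h3 := Real.hasDerivAt_rpow_const (x := x) (p := p-γ) (Or.inl hx.ne')
    have H := (((h1.const_mul a).mul_const A).add ((h2.const_mul b).mul_const B)).sub
        (h3.mul_const G)
    rw [hΦdef]
    convert H using 1
    case e'_4 => rfl
    case e'_5 => rfl
    case e'_8 => rfl
    rw [show 2-γ-1 = 1-γ by ring,
      show x ^ (2*θ-γ-1) = x^(1-γ) * x^(2*θ-2) by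
        rw [← Real.rpow_add hx, show 1-γ+(2*θ-2) = 2*θ-γ-1 by ring],
      show x ^ (p-γ-1) = x^(1-γ) * x^(p-2) by
        rw [← Real.rpow_add hx, show 1-γ+(p-2) = p-γ-1 by ring]]
    ring
  refine ⟨keyΦ, fun t ht htne => ?_⟩
  rcases lt_or_gt_of_ne htne with hlt | hgt
  · -- t < t₀ : Φ strictly increasing on [t, t₀]
    have mono : StrictMonoOn Φ (Set.Icc t t₀) := by
      apply strictMonoOn_of_deriv_pos (convex_Icc _ _)
      · intro x hx
        exact (hΦ x (lt_of_lt_of_le ht hx.1)).differentiableAt.continuousAt.continuousWithinAt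
      · intro x hx
        rw [interior_Icc] at hx
        have hx0 : 0 < x := ht.trans hx.1
        rw [(hΦ x hx0).deriv]
        exact mul_pos (Real.rpow_pos_of_pos hx0 _) (hsign_pos x hx0 hx.2)
    exact mono ⟨le_rfl, hlt.le⟩ ⟨hlt.le, le_rfl⟩ hlt
  · -- t₀ < t : Φ strictly decreasing on [t₀, t]
    have anti : StrictAntiOn Φ (Set.Icc t₀ t) := by
      apply strictAntiOn_of_deriv_neg (convex_Icc _ _)
      · intro x hx
        exact (hΦ x (lt_of_lt_of_le ht₀ hx.1)).differentiableAt.continuousAt.continuousWithinAt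
      · intro x hx
        rw [interior_Icc] at hx
        have hx0 : 0 < x := ht₀.trans hx.1
        rw [(hΦ x hx0).deriv]
        exact mul_neg_of_pos_of_neg (Real.rpow_pos_of_pos hx0 _) (hsign_neg x hx.1)
    exact anti ⟨le_rfl, hgt.le⟩ ⟨hgt.le, le_rfl⟩ hgt
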